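/- Let A and B be unital complex Banach algebras and T : A → B a surjective spectrally bounded linear map, i.e., there is M ≥ 0 with r(Tx) ≤ M·r(x) for all x ∈ A. Then the separating space of T is contained in the Jacobson radical of B. In particular, if B is semisimple then T is continuous. -/

import Mathlib

open scoped ENNReal NNReal Topology
open Filter

set_option linter.unusedSectionVars false

namespace AupetitProof

variable {B : Type*} [NormedRing B] [NormedAlgebra ℂ B] [CompleteSpace B] [NormOneClass B]

/-- real-valued spectral radius -/
noncomputable def rr (b : B) : ℝ := (spectralRadius ℂ b).toReal

lemma spectralRadius_ne_top (b : B) : spectralRadius ℂ b ≠ ⊤ :=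
  ne_top_of_le_ne_top ENNReal.coe_ne_top (spectrum.spectralRadius_le_nnnorm (𝕜 := ℂ) b)

lemma rr_nonneg (b : B) : 0 ≤ rr b := ENNReal.toReal_nonneg

lemma rr_le_norm (b : B) : rr b ≤ ‖b‖ := by
  have h := ENNReal.toReal_mono ENNReal.coe_ne_top (spectrum.spectralRadius_le_nnnorm (𝕜 := ℂ) b)
  simpa [rr] using h

lemma rr_zero : rr (0 : B) = 0 := by simp [rr]

lemma norm_le_rr_of_mem {b : B} {μ : ℂ} (hμ : μ ∈ spectrum ℂ b) : ‖μ‖ ≤ rr b := by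
  have h : (‖μ‖₊ : ℝ≥0∞) ≤ spectralRadius ℂ b := le_iSup₂ (f := fun k _ => (‖k‖₊ : ℝ≥0∞)) μ hμ
  have h2 := ENNReal.toReal_mono (spectralRadius_ne_top b) h
  simpa [rr] using h2

lemma tendsto_pow_norm_div (b : B) :
    Tendsto (fun n : ℕ => ‖b ^ n‖ ^ ((1 : ℝ) / n)) atTop (𝓝 (rr b)) := by
  have h := spectrum.pow_nnnorm_pow_one_div_tendsto_nhds_spectralRadius b
  have h2 := (ENNReal.tendsto_toReal (spectralRadius_ne_top b)).comp h
  convert h2 using 2 with n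
  rw [Function.comp_apply, ← ENNReal.toReal_rpow, ENNReal.coe_toReal, coe_nnnorm]
  rfl

lemma rr_le_pow_root (b : B) (N : ℕ) (hN : 0 < N) : rr b ≤ ‖b ^ N‖ ^ ((1 : ℝ) / N) := by
  obtain ⟨n, rfl⟩ : ∃ n, N = n + 1 := ⟨N - 1, (Nat.succ_pred_eq_of_pos hN).symm⟩
  have h := spectrum.spectralRadius_le_pow_nnnorm_pow_one_div ℂ b n
  rw [nnnorm_one, ENNReal.coe_one, ENNReal.one_rpow, mul_one] at h
  have hfin : ((‖b ^ (n+1)‖₊ : ℝ≥0∞) ^ (1 / ((n : ℝ) + 1))) ≠ ⊤ :=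
    ENNReal.rpow_ne_top_of_nonneg (by positivity) ENNReal.coe_ne_top
  have h2 := ENNReal.toReal_mono hfin h
  rw [← ENNReal.toReal_rpow, ENNReal.coe_toReal, coe_nnnorm] at h2
  simpa [rr, Nat.cast_add] using h2

lemma root_le_imp {x y : ℝ} {N : ℕ} (hN : N ≠ 0) (hx : 0 ≤ x) (_hy : 0 ≤ y)
    (h : x ^ ((1 : ℝ) / N) ≤ y) : x ≤ y ^ N := by
  have h2 := pow_le_pow_left₀ (Real.rpow_nonneg hx _) h N
  rwa [← Real.rpow_natCast (x ^ ((1:ℝ)/N)) N, ← Real.rpow_mul hx,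
    one_div, inv_mul_cancel₀ (by exact_mod_cast hN), Real.rpow_one] at h2

lemma le_root_imp {x y : ℝ} {N : ℕ} (hN : N ≠ 0) (hx : 0 ≤ x) (hy : 0 ≤ y)
    (h : x ≤ y ^ N) : x ^ ((1 : ℝ) / N) ≤ y := by
  have h2 := Real.rpow_le_rpow hx h (by positivity : (0:ℝ) ≤ 1/N)
  rwa [← Real.rpow_natCast y N, ← Real.rpow_mul hy, mul_one_div,
    div_self (by exact_mod_cast hN), Real.rpow_one] at h2

/-- doubling chain bound -/
lemma pow_two_chain (z : B) {c : ℝ} (hc : 0 ≤ c) {k k' : ℕ} (hk : k ≤ k')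
    (h : ‖z ^ 2 ^ k‖ ≤ c ^ 2 ^ k) : ‖z ^ 2 ^ k'‖ ≤ c ^ 2 ^ k' := by
  induction k' with
  | zero => rw [Nat.le_zero.mp hk] at h; exact h
  | succ m ih =>
    rcases Nat.lt_or_ge k (m + 1) with h1 | h1
    · have h3 := ih (Nat.lt_succ_iff.mp h1)
      have hsplit : (2 : ℕ) ^ (m + 1) = 2 ^ m + 2 ^ m := by ring
      calc ‖z ^ 2 ^ (m+1)‖ = ‖z ^ 2 ^ m * z ^ 2 ^ m‖ := by rw [hsplit, pow_add]
        _ ≤ ‖z ^ 2 ^ m‖ * ‖z ^ 2 ^ m‖ := norm_mul_le _ _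
        _ ≤ c ^ 2 ^ m * c ^ 2 ^ m := mul_le_mul h3 h3 (norm_nonneg _) (pow_nonneg hc _)
        _ = c ^ 2 ^ (m+1) := by rw [hsplit, pow_add]
    · have : k = m + 1 := le_antisymm hk h1
      subst this; exact h

lemma norm_pow_sub_le (b z : B) : ∀ n : ℕ, ‖(b + z) ^ n - b ^ n‖ ≤ (‖b‖ + ‖z‖) ^ n - ‖b‖ ^ n := by
  intro n
  induction n with
  | zero => simp
  | succ n ih =>
    have key : (b + z) ^ (n+1) - b ^ (n+1) = ((b + z) ^ n - b ^ n) * (b + z) + b ^ n * z := by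
      rw [pow_succ, pow_succ]; noncomm_ring
    rw [key]
    have h1 : ‖((b + z) ^ n - b ^ n) * (b + z) + b ^ n * z‖
        ≤ ‖(b + z) ^ n - b ^ n‖ * ‖b + z‖ + ‖b ^ n‖ * ‖z‖ :=
      le_trans (norm_add_le _ _) (add_le_add (norm_mul_le _ _) (norm_mul_le _ _))
    have h2 : ‖(b + z) ^ n - b ^ n‖ * ‖b + z‖ ≤ ((‖b‖ + ‖z‖) ^ n - ‖b‖ ^ n) * (‖b‖ + ‖z‖) := by
      apply mul_le_mul ih (norm_add_le _ _) (norm_nonneg _)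
      have := pow_le_pow_left₀ (norm_nonneg b) (le_add_of_nonneg_right (norm_nonneg z)) n
      linarith
    have h3 : ‖b ^ n‖ * ‖z‖ ≤ ‖b‖ ^ n * ‖z‖ :=
      mul_le_mul_of_nonneg_right (norm_pow_le b n) (norm_nonneg z)
    have expand : ((‖b‖ + ‖z‖) ^ n - ‖b‖ ^ n) * (‖b‖ + ‖z‖) + ‖b‖ ^ n * ‖z‖
        = (‖b‖ + ‖z‖) ^ (n+1) - ‖b‖ ^ (n+1) := by ring
    linarith

/-- upper semicontinuity of the spectral radius -/
lemma rr_usc (b : B) {ε : ℝ} (hε : 0 < ε) :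
    ∃ δ > 0, ∀ z : B, ‖z‖ ≤ δ → rr (b + z) ≤ rr b + ε := by
  -- find n with ‖b^n‖ ≤ (rr b + ε/2)^n
  have hhalf : rr b < rr b + ε / 2 := by linarith
  have hev : ∀ᶠ n : ℕ in atTop, ‖b ^ n‖ ^ ((1:ℝ)/n) < rr b + ε/2 :=
    (tendsto_pow_norm_div b).eventually_lt_const hhalf
  obtain ⟨n₀, hn₀⟩ := eventually_atTop.mp hev
  set n := max n₀ 1 with hn
  have hn1 : 1 ≤ n := le_max_right _ _
  have hnne : n ≠ 0 := by omega
  have hbase : (0:ℝ) ≤ rr b + ε/2 := by have := rr_nonneg b; linarith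
  have hbn : ‖b ^ n‖ ≤ (rr b + ε/2) ^ n :=
    root_le_imp hnne (norm_nonneg _) hbase (hn₀ n (le_max_left _ _)).le
  have hlt : (rr b + ε/2) ^ n < (rr b + ε) ^ n :=
    pow_lt_pow_left₀ (by linarith) hbase hnne
  set gap := (rr b + ε) ^ n - ‖b ^ n‖ with hgap
  have hgappos : 0 < gap := by
    have : ‖b ^ n‖ < (rr b + ε) ^ n := lt_of_le_of_lt hbn hlt
    simp only [hgap]; linarith
  have hcont : ContinuousAt (fun t : ℝ => (‖b‖ + t) ^ n) 0 := by fun_prop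
  have hf0 : ((fun t : ℝ => (‖b‖ + t) ^ n) 0) = ‖b‖ ^ n := by norm_num
  have hevt : ∀ᶠ t : ℝ in 𝓝 0, (‖b‖ + t) ^ n < ‖b‖ ^ n + gap := by
    refine hcont.eventually_lt_const ?_
    rw [hf0]; linarith
  obtain ⟨δ, hδpos, hδ⟩ := Metric.eventually_nhds_iff.mp hevt
  refine ⟨δ/2, by positivity, fun z hz => ?_⟩
  have hzlt : (‖b‖ + ‖z‖) ^ n < ‖b‖ ^ n + gap := by
    apply hδ
    rw [Real.dist_eq, sub_zero, abs_of_nonneg (norm_nonneg z)]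
    linarith
  have h1 : ‖(b + z) ^ n‖ ≤ ‖b ^ n‖ + ((‖b‖ + ‖z‖) ^ n - ‖b‖ ^ n) := by
    have := norm_pow_sub_le b z n
    have h2 : ‖(b + z) ^ n‖ ≤ ‖b ^ n‖ + ‖(b + z) ^ n - b ^ n‖ := by
      have := norm_add_le (b ^ n) ((b + z) ^ n - b ^ n)
      simpa using this
    linarith
  have h2 : ‖(b + z) ^ n‖ ≤ (rr b + ε) ^ n := by
    simp only [hgap] at hzlt hgappos ⊢
    linarith
  calc rr (b + z) ≤ ‖(b + z) ^ n‖ ^ ((1:ℝ)/n) := rr_le_pow_root _ n (by omega)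
    _ ≤ rr b + ε := le_root_imp hnne (norm_nonneg _) (by linarith) h2

/-- conjugation invariance -/
lemma isUnit_conj_iff (u : Bˣ) (x : B) : IsUnit ((u : B) * x * (↑u⁻¹ : B)) ↔ IsUnit x := by
  constructor
  · intro h
    have h2 : x = ((↑u⁻¹ : B) * ((u : B) * x * (↑u⁻¹ : B))) * (u : B) := by
      simp [← mul_assoc]
    rw [h2]
    exact ((u⁻¹.isUnit.mul h).mul u.isUnit)
  · intro h
    exact (u.isUnit.mul h).mul u⁻¹.isUnit

lemma spectrum_conj (u : Bˣ) (x : B) :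
    spectrum ℂ ((u : B) * x * (↑u⁻¹ : B)) = spectrum ℂ x := by
  ext μ
  simp only [spectrum.mem_iff]
  have key : algebraMap ℂ B μ - (u : B) * x * (↑u⁻¹ : B)
      = (u : B) * (algebraMap ℂ B μ - x) * (↑u⁻¹ : B) := by
    rw [mul_sub, sub_mul]
    congr 1
    rw [← Algebra.commutes μ (u : B), mul_assoc, Units.mul_inv, mul_one]
  rw [key, isUnit_conj_iff]

lemma rr_conj (u : Bˣ) (x : B) : rr ((u : B) * x * (↑u⁻¹ : B)) = rr x := by
  simp [rr, spectralRadius, spectrum_conj]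

/-- maximal left ideals are closed -/
lemma IsMaximal.isClosed {L : Ideal B} (hL : L.IsMaximal) : IsClosed (L : Set B) := by
  have hne : L.topologicalClosure ≠ ⊤ := by
    intro htop
    have h1 : (1 : B) ∈ L.topologicalClosure := htop ▸ Submodule.mem_top
    have h1' : (1 : B) ∈ closure (L : Set B) := by
      have hset : (L.topologicalClosure : Set B) = closure (L : Set B) :=
        Submodule.topologicalClosure_coe L
      have h1'' : (1 : B) ∈ (L.topologicalClosure : Set B) := h1
      rwa [hset] at h1''
    obtain ⟨ℓ, hℓL, hℓ⟩ := Metric.mem_closure_iff.mp h1' 1 one_pos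
    have hℓu : IsUnit ℓ := by
      have hn : ‖1 - ℓ‖ < 1 := by rw [dist_eq_norm] at hℓ; exact hℓ
      have := (Units.oneSub (1 - ℓ) hn).isUnit
      rwa [Units.val_oneSub, sub_sub_cancel] at this
    exact hL.ne_top (Ideal.eq_top_of_isUnit_mem L hℓL hℓu)
  have hco : IsCoatom L := Ideal.isMaximal_def.mp hL
  have heq : L.topologicalClosure = L := by
    rcases eq_or_lt_of_le L.le_topologicalClosure with h | h
    · exact h.symm
    · exact absurd (hco.2 _ h) hne
  have : closure (L : Set B) = (L : Set B) := by
    rw [← Submodule.topologicalClosure_coe, heq]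
  rw [← this]; exact isClosed_closure


variable {B : Type*} [NormedRing B] [NormedAlgebra ℂ B] [CompleteSpace B] [NormOneClass B]

lemma smulC_mem {L : Ideal B} {x : B} (s : ℂ) (h : x ∈ L) : s • x ∈ L := by
  rw [Algebra.smul_def]; exact Ideal.mul_mem_left _ _ h

/-- Core algebraic lemma: if y is quasinilpotent and all its unit-conjugate differences are
quasinilpotent, then y belongs to every maximal left ideal. -/
theorem mem_maximal_of_conj (y : B) (h1 : rr y = 0)
    (h2 : ∀ u : Bˣ, rr ((u : B) * y * (↑u⁻¹ : B) - y) = 0)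
    (L : Ideal B) (hL : L.IsMaximal) : y ∈ L := by
  by_contra hyL
  by_cases hcase : ∀ ℓ ∈ L, ℓ * y ∈ L
  · -- Case 2 : right multiplication by y descends to B ⧸ L
    haveI hLc : IsClosed (L : Set B) := IsMaximal.isClosed hL
    haveI : Nontrivial (B ⧸ L) :=
      Submodule.Quotient.nontrivial_iff.mpr hL.ne_top
    -- the B-linear right multiplication operator
    set φ : B →ₗ[B] B := LinearMap.toSpanSingleton B B y with hφ
    have hker : L ≤ LinearMap.ker ((L.mkQ).comp φ) := by
      intro ℓ hℓ
      simp only [LinearMap.mem_ker, LinearMap.comp_apply, hφ,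
        LinearMap.toSpanSingleton_apply, Submodule.mkQ_apply, smul_eq_mul]
      rw [Submodule.Quotient.mk_eq_zero]
      exact hcase ℓ hℓ
    set D : (B ⧸ L) →ₗ[B] (B ⧸ L) := L.liftQ ((L.mkQ).comp φ) hker with hD
    have hDapp : ∀ b : B, D (Submodule.Quotient.mk b) = Submodule.Quotient.mk (b * y) := by
      intro b
      simp [hD, hφ, Submodule.liftQ_apply, LinearMap.toSpanSingleton_apply, smul_eq_mul]
    -- continuity
    have hbound : ∀ v : B ⧸ L, ‖(D.restrictScalars ℂ) v‖ ≤ (‖y‖ + 1) * ‖v‖ := by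
      intro v
      refine le_of_forall_pos_le_add (fun ε hε => ?_)
      have hδ : 0 < ε / (‖y‖ + 1) := by positivity
      obtain ⟨m, hm, hmlt⟩ := Submodule.Quotient.norm_mk_lt v hδ
      have : (D.restrictScalars ℂ) v = Submodule.Quotient.mk (m * y) := by
        rw [← hm]; exact hDapp m
      rw [this]
      calc ‖(Submodule.Quotient.mk (m * y) : B ⧸ L)‖ ≤ ‖m * y‖ :=
            Submodule.Quotient.norm_mk_le _ _
        _ ≤ ‖m‖ * ‖y‖ := norm_mul_le _ _
        _ ≤ (‖v‖ + ε / (‖y‖ + 1)) * (‖y‖ + 1) := by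
            apply mul_le_mul hmlt.le (by linarith) (norm_nonneg _) (by positivity)
        _ = (‖y‖ + 1) * ‖v‖ + ε / (‖y‖ + 1) * (‖y‖ + 1) := by ring
        _ ≤ (‖y‖ + 1) * ‖v‖ + ε := by
            rw [div_mul_cancel₀ _ (by positivity : (‖y‖:ℝ) + 1 ≠ 0)]
    set Dc : (B ⧸ L) →L[ℂ] (B ⧸ L) :=
      LinearMap.mkContinuous (D.restrictScalars ℂ) (‖y‖ + 1) hbound with hDc
    haveI : Nontrivial ((B ⧸ L) →L[ℂ] (B ⧸ L)) := by
      obtain ⟨v, hv⟩ := exists_ne (0 : B ⧸ L)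
      refine ⟨1, 0, fun h => hv ?_⟩
      have := congrFun (congrArg DFunLike.coe h) v
      simpa using this
    obtain ⟨μ, hμ⟩ := spectrum.nonempty Dc
    -- the B-linear map G = D - μ
    have hker2 : L ≤ LinearMap.ker ((L.mkQ).comp (φ - μ • LinearMap.id)) := by
      intro ℓ hℓ
      simp only [LinearMap.mem_ker, LinearMap.comp_apply, LinearMap.sub_apply, hφ,
        LinearMap.toSpanSingleton_apply, LinearMap.smul_apply, LinearMap.id_apply,
        Submodule.mkQ_apply, smul_eq_mul]
      rw [Submodule.Quotient.mk_eq_zero]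
      exact L.sub_mem (hcase ℓ hℓ) (smulC_mem μ hℓ)
    set G : (B ⧸ L) →ₗ[B] (B ⧸ L) := L.liftQ ((L.mkQ).comp (φ - μ • LinearMap.id)) hker2 with hG
    have hGapp : ∀ b : B, G (Submodule.Quotient.mk b)
        = Submodule.Quotient.mk (b * y - μ • b) := by
      intro b
      simp [hG, hφ, Submodule.liftQ_apply, LinearMap.toSpanSingleton_apply, smul_eq_mul]
    have hGfun : ∀ v : B ⧸ L, G v = Dc v - μ • v := by
      intro v
      obtain ⟨b, rfl⟩ := Submodule.Quotient.mk_surjective _ v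
      rw [hGapp b]
      have h1' : Dc (Submodule.Quotient.mk b) = Submodule.Quotient.mk (b * y) := hDapp b
      rw [h1', ← Submodule.Quotient.mk_smul, ← Submodule.Quotient.mk_sub]
    -- simple module
    haveI hsimp : IsSimpleModule B (B ⧸ L) :=
      isSimpleModule_iff_isCoatom.mpr (Ideal.isMaximal_def.mp hL)
    -- shared subcase : mk (y - μ • 1) = 0 leads to contradiction
    have hshared : G (Submodule.Quotient.mk (1 : B)) = 0 → False := by
      intro h0
      rw [hGapp, Submodule.Quotient.mk_eq_zero, one_mul] at h0
      -- y - μ • 1 ∈ L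
      have hμ0 : μ ≠ 0 := by
        rintro rfl
        simp only [zero_smul, sub_zero] at h0
        exact hyL h0
      have hunit : IsUnit (algebraMap ℂ B μ - y) := by
        by_contra hnu
        have : μ ∈ spectrum ℂ y := spectrum.mem_iff.mpr hnu
        have := norm_le_rr_of_mem this
        rw [h1] at this
        exact hμ0 (by simpa using le_antisymm this (norm_nonneg μ))
      have hmem : algebraMap ℂ B μ - y ∈ L := by
        have : algebraMap ℂ B μ - y = -(y - μ • (1 : B)) := by
          rw [Algebra.algebraMap_eq_smul_one]; abel
        rw [this]
        exact L.neg_mem h0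
      exact hL.ne_top (Ideal.eq_top_of_isUnit_mem L hmem hunit)
    rcases eq_bot_or_eq_top (LinearMap.ker G) with hkG | hkG
    · -- injective; look at range
      rcases eq_bot_or_eq_top (LinearMap.range G) with hrG | hrG
      · -- range ⊥ : G = 0, so G (mk 1) = 0
        apply hshared
        have : G (Submodule.Quotient.mk (1:B)) ∈ LinearMap.range G :=
          LinearMap.mem_range_self _ _
        rw [hrG] at this
        exact this
      · -- bijective : contradiction with μ ∈ spectrum
        have hinj : Function.Injective G := LinearMap.ker_eq_bot.mp hkG
        have hsurj : Function.Surjective G := LinearMap.range_eq_top.mp hrG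
        set f : (B ⧸ L) →L[ℂ] (B ⧸ L) := μ • (1 : (B ⧸ L) →L[ℂ] (B ⧸ L)) - Dc with hf
        have hffun : ∀ v, f v = -(G v) := by
          intro v
          rw [hGfun v]
          simp [hf]
        have hfinj : Function.Injective f := by
          intro v w hvw
          rw [hffun, hffun, neg_inj] at hvw
          exact hinj hvw
        have hfsurj : Function.Surjective f := by
          intro w
          obtain ⟨v, hv⟩ := hsurj (-w)
          exact ⟨v, by rw [hffun, hv, neg_neg]⟩
        have hker' : LinearMap.ker (f : (B ⧸ L) →ₗ[ℂ] (B ⧸ L)) = ⊥ := (LinearMap.ker_eq_bot (f := (f : (B ⧸ L) →ₗ[ℂ] (B ⧸ L)))).mpr hfinj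
        have hrange' : LinearMap.range (f : (B ⧸ L) →ₗ[ℂ] (B ⧸ L)) = ⊤ :=
          (LinearMap.range_eq_top (f := (f : (B ⧸ L) →ₗ[ℂ] (B ⧸ L)))).mpr hfsurj
        set e := ContinuousLinearEquiv.ofBijective f hker' hrange' with he
        have hef : ∀ v, e v = f v := by
          intro v
          rw [he]
          rfl
        have hfu : IsUnit f := by
          refine ⟨⟨f, (e.symm : (B ⧸ L) →L[ℂ] (B ⧸ L)), ?_, ?_⟩, rfl⟩
          · ext v
            simp only [ContinuousLinearMap.coe_mul, Function.comp_apply, ContinuousLinearMap.mul_apply,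
              ContinuousLinearEquiv.coe_coe, ContinuousLinearMap.one_apply]
            rw [← hef]
            exact e.apply_symm_apply v
          · ext v
            simp only [ContinuousLinearMap.coe_mul, Function.comp_apply, ContinuousLinearMap.mul_apply,
              ContinuousLinearEquiv.coe_coe, ContinuousLinearMap.one_apply]
            rw [← hef]
            exact e.symm_apply_apply v
        have : ¬ IsUnit (algebraMap ℂ ((B ⧸ L) →L[ℂ] (B ⧸ L)) μ - Dc) :=
          spectrum.mem_iff.mp hμ
        apply this
        have : algebraMap ℂ ((B ⧸ L) →L[ℂ] (B ⧸ L)) μ - Dc = f := by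
          rw [hf, Algebra.algebraMap_eq_smul_one]
        rw [this]
        exact hfu
    · -- ker = ⊤ : mk 1 ∈ ker
      apply hshared
      have : Submodule.Quotient.mk (1:B) ∈ LinearMap.ker G := by rw [hkG]; trivial
      exact this
  · -- Case 1 : explicit a ∈ L with a * y - 1 ∈ L
    push_neg at hcase
    obtain ⟨ℓ₀, hℓ₀L, hℓ₀y⟩ := hcase
    have hlt : L < L ⊔ Ideal.span {ℓ₀ * y} := by
      refine lt_of_le_of_ne le_sup_left (fun h => hℓ₀y ?_)
      rw [h]
      exact Submodule.mem_sup_right (Ideal.subset_span rfl)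
    have htop : L ⊔ Ideal.span {ℓ₀ * y} = ⊤ := (Ideal.isMaximal_def.mp hL).2 _ hlt
    have h1mem : (1 : B) ∈ L ⊔ Ideal.span {ℓ₀ * y} := htop ▸ Submodule.mem_top
    obtain ⟨m, hm, q, hq, hmq⟩ := Submodule.mem_sup.mp h1mem
    obtain ⟨c, hc⟩ := Ideal.mem_span_singleton'.mp hq
    set a : B := c * ℓ₀ with ha
    have haL : a ∈ L := Ideal.mul_mem_left L c hℓ₀L
    have hay : a * y - 1 ∈ L := by
      have h1' : a * y = q := by rw [ha, mul_assoc, hc]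
      have h2' : a * y - 1 = -m := by rw [h1', ← hmq]; abel
      rw [h2']
      exact L.neg_mem hm
    -- the unit u = 1 + s • a  with s = t real small
    set t : ℝ := (2 * (‖a‖ + 1))⁻¹ with hts
    have ht : 0 < t := by positivity
    set s : ℂ := (t : ℂ) with hsdef
    have hsn : ‖-(s • a)‖ < 1 := by
      rw [norm_neg, norm_smul, hsdef, Complex.norm_real, Real.norm_eq_abs]
      rw [abs_of_pos ht, hts]
      rw [inv_mul_eq_div, div_lt_one (by positivity)]
      linarith [norm_nonneg a]
    set u : Bˣ := Units.oneSub (-(s • a)) hsn with hu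
    have huval : (u : B) = 1 + s • a := by
      rw [hu, Units.val_oneSub, sub_neg_eq_add]
    set w : B := (↑u⁻¹ : B) with hwdef
    have hwmul : w * (u : B) = 1 := u.inv_mul
    have hwid : w = 1 - s • (w * a) := by
      have h0 : w * ((1:B) + s • a) = 1 := by rw [← huval]; exact hwmul
      rw [mul_add, mul_one, mul_smul_comm] at h0
      exact (eq_sub_of_add_eq h0)
    set z : B := (u : B) * y * w - y with hz
    have hz0 : rr z = 0 := h2 u
    -- z - s • 1 ∈ L
    have hmemz : z - s • (1 : B) ∈ L := by
      have huy : (u : B) * y = y + s • (a * y) := by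
        rw [huval, add_mul, one_mul, smul_mul_assoc]
      have hfact : (u : B) * y * (w * a) = y * (w * a) + s • ((a * y) * (w * a)) := by
        rw [huy, add_mul, smul_mul_assoc]
      have huyw : (u : B) * y * w
          = (u : B) * y - s • (y * (w * a)) - (s * s) • ((a * y) * (w * a)) := by
        conv_lhs => rw [hwid]
        rw [mul_sub, mul_one, mul_smul_comm, hfact, smul_add, smul_smul]
        abel
      have hexp : z - s • (1 : B)
          = s • (a * y) - s • (1 : B) - s • (y * (w * a)) - (s * s) • ((a * y) * (w * a)) := by
        rw [hz, huyw, huy]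
        abel
      rw [hexp]
      have hm1 : s • (a * y) - s • (1 : B) ∈ L := by
        rw [← smul_sub]; exact smulC_mem _ hay
      have hm2 : s • (y * (w * a)) ∈ L := by
        rw [← mul_assoc]; exact smulC_mem _ (Ideal.mul_mem_left L _ haL)
      have hm3 : (s * s) • ((a * y) * (w * a)) ∈ L := by
        rw [← mul_assoc]; exact smulC_mem _ (Ideal.mul_mem_left L _ haL)
      exact L.sub_mem (L.sub_mem hm1 hm2) hm3
    -- contradiction
    have hnu : ¬ IsUnit (algebraMap ℂ B s - z) := by
      intro hu'
      have hmem' : algebraMap ℂ B s - z ∈ L := by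
        have : algebraMap ℂ B s - z = -(z - s • (1 : B)) := by
          rw [Algebra.algebraMap_eq_smul_one]; abel
        rw [this]
        exact L.neg_mem hmemz
      exact hL.ne_top (Ideal.eq_top_of_isUnit_mem L hmem' hu')
    have hsp : s ∈ spectrum ℂ z := spectrum.mem_iff.mpr hnu
    have hle := norm_le_rr_of_mem hsp
    rw [hz0, hsdef, Complex.norm_real, Real.norm_eq_abs, abs_of_pos ht] at hle
    linarith


lemma diff_pow {g : ℂ → B} (hg : Differentiable ℂ g) (n : ℕ) :
    Differentiable ℂ (fun μ => g μ ^ n) := by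
  induction n with
  | zero => simpa using differentiable_const (1 : B)
  | succ k ih =>
    have : (fun μ => g μ ^ (k+1)) = fun μ => g μ ^ k * g μ := by
      funext μ; rw [pow_succ]
    rw [this]
    exact ih.mul hg

lemma affine_diff (w d : B) : Differentiable ℂ (fun μ : ℂ => w + μ • d) :=
  (differentiable_const w).add (differentiable_id.smul_const d)

/-- Dini-type uniformization on a circle -/
lemma dini_circle (w d : B) {t P' : ℝ} (_ht : 0 < t) (hP' : 0 < P')
    (hc : ∀ μ : ℂ, ‖μ‖ = t → rr (w + μ • d) < P') :
    ∃ k₀ : ℕ, ∀ k ≥ k₀, ∀ μ : ℂ, ‖μ‖ = t → ‖(w + μ • d) ^ 2 ^ k‖ ≤ P' ^ 2 ^ k := by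
  set V : ℕ → Set ℂ := fun k => {μ | ‖(w + μ • d) ^ 2 ^ k‖ < P' ^ 2 ^ k} with hV
  have hVopen : ∀ k, IsOpen (V k) := by
    intro k
    apply isOpen_lt _ continuous_const
    exact (diff_pow (affine_diff w d) (2 ^ k)).continuous.norm
  have hcover : Metric.sphere (0 : ℂ) t ⊆ ⋃ k, V k := by
    intro μ hμ
    have hμt : ‖μ‖ = t := by rwa [mem_sphere_zero_iff_norm] at hμ
    set z := w + μ • d with hzdef
    have hrr : rr z < P' := hc μ hμt
    have hev : ∀ᶠ n : ℕ in atTop, ‖z ^ n‖ ^ ((1:ℝ)/n) < P' :=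
      (tendsto_pow_norm_div z).eventually_lt_const hrr
    obtain ⟨n₀, hn₀⟩ := eventually_atTop.mp hev
    have h2k : n₀ ≤ 2 ^ n₀ := Nat.le_of_lt (Nat.lt_two_pow_self)
    have hroot := hn₀ (2 ^ n₀) h2k
    have hNne : (2:ℕ) ^ n₀ ≠ 0 := by positivity
    have hlt : ‖z ^ 2 ^ n₀‖ < P' ^ 2 ^ n₀ := by
      have hcalc : ‖z ^ 2 ^ n₀‖ = (‖z ^ 2 ^ n₀‖ ^ ((1:ℝ)/(2^n₀ : ℕ))) ^ (2^n₀ : ℕ) := by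
        rw [← Real.rpow_natCast (‖z ^ 2 ^ n₀‖ ^ ((1:ℝ)/(2^n₀:ℕ))) (2^n₀), ← Real.rpow_mul (norm_nonneg _),
          one_div, inv_mul_cancel₀ (by exact_mod_cast hNne), Real.rpow_one]
      rw [hcalc]
      exact pow_lt_pow_left₀ hroot (Real.rpow_nonneg (norm_nonneg _) _) hNne
    exact Set.mem_iUnion.mpr ⟨n₀, hlt⟩
  obtain ⟨F, hF⟩ := (isCompact_sphere (0:ℂ) t).elim_finite_subcover V hVopen hcover
  refine ⟨F.sup id, fun k hk μ hμt => ?_⟩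
  have hμs : μ ∈ Metric.sphere (0:ℂ) t := by rwa [mem_sphere_zero_iff_norm]
  obtain ⟨j, hjF, hjV⟩ := Set.mem_iUnion₂.mp (hF hμs)
  have hjk : j ≤ k := le_trans (Finset.le_sup (f := id) hjF) hk
  exact pow_two_chain (w + μ • d) hP'.le hjk (le_of_lt hjV)

/-- Maximum principle on the annulus -/
lemma annulus_bound (w d : B) {ρ R : ℝ} (hρ0 : 0 < ρ) (hρ1 : ρ < 1) (hR : 1 < R)
    (N m : ℕ) {Pn Qn : ℝ}
    (hPn : ∀ μ : ℂ, ‖μ‖ = ρ → ‖(w + μ • d) ^ N‖ ≤ Pn)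
    (hQn : ∀ μ : ℂ, ‖μ‖ = R → ‖(w + μ • d) ^ N‖ ≤ Qn) :
    ‖(w + d) ^ N‖ ≤ max ((ρ ^ m)⁻¹ * Pn) ((R ^ m)⁻¹ * Qn) := by
  set U : Set ℂ := {μ | ρ < ‖μ‖ ∧ ‖μ‖ < R} with hU
  set f : ℂ → B := fun μ => (μ ^ m)⁻¹ • (w + μ • d) ^ N with hf
  have hUopen : IsOpen U :=
    (isOpen_lt continuous_const continuous_norm).inter (isOpen_lt continuous_norm continuous_const)
  have hUsub : U ⊆ {μ : ℂ | μ ≠ 0} := by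
    intro μ hμ
    rw [hU] at hμ
    simp only [Set.mem_setOf_eq] at hμ ⊢
    intro h0
    rw [h0] at hμ
    simp only [norm_zero] at hμ
    linarith [hμ.1]
  have hdiff : DifferentiableOn ℂ f {μ : ℂ | μ ≠ 0} := by
    apply DifferentiableOn.fun_smul
    · exact DifferentiableOn.inv ((differentiable_pow m).differentiableOn)
        (fun μ hμ => pow_ne_zero m hμ)
    · exact (diff_pow (affine_diff w d) N).differentiableOn
  have hclsub : closure U ⊆ {μ : ℂ | ρ ≤ ‖μ‖ ∧ ‖μ‖ ≤ R} := by
    apply closure_minimal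
    · intro μ hμ
      rw [hU] at hμ
      exact ⟨hμ.1.le, hμ.2.le⟩
    · exact (isClosed_le continuous_const continuous_norm).inter
        (isClosed_le continuous_norm continuous_const)
  have hclne : closure U ⊆ {μ : ℂ | μ ≠ 0} := by
    intro μ hμ
    have := (hclsub hμ).1
    simp only [Set.mem_setOf_eq]
    intro h0
    rw [h0] at this
    simp at this
    linarith
  have hdcc : DiffContOnCl ℂ f U :=
    ⟨hdiff.mono hUsub, (hdiff.continuousOn).mono hclne⟩
  have hbd : Bornology.IsBounded U := by
    apply (Metric.isBounded_ball (x := (0:ℂ)) (r := R + 1)).subset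
    intro μ hμ
    rw [hU] at hμ
    rw [Metric.mem_ball, dist_zero_right]
    have := hμ.2
    linarith
  have hfr : ∀ z ∈ frontier U, ‖z‖ = ρ ∨ ‖z‖ = R := by
    intro z hz
    rw [hUopen.frontier_eq] at hz
    obtain ⟨hzc, hzU⟩ := hz
    rw [hU] at hzU
    have h1' := hclsub hzc
    simp only [Set.mem_setOf_eq] at h1' hzU
    rcases h1' with ⟨ha, hb⟩
    by_cases hc : ρ < ‖z‖
    · right
      by_contra hne
      exact hzU ⟨hc, lt_of_le_of_ne hb hne⟩
    · left; linarith
  have hfrb : ∀ z ∈ frontier U, ‖f z‖ ≤ max ((ρ ^ m)⁻¹ * Pn) ((R ^ m)⁻¹ * Qn) := by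
    intro z hz
    have hnf : ‖f z‖ = (‖z‖ ^ m)⁻¹ * ‖(w + z • d) ^ N‖ := by
      rw [hf]
      simp only [norm_smul, norm_inv, norm_pow]
    rcases hfr z hz with h | h
    · refine le_max_of_le_left ?_
      rw [hnf, h]
      exact mul_le_mul_of_nonneg_left (hPn z h) (by positivity)
    · refine le_max_of_le_right ?_
      rw [hnf, h]
      exact mul_le_mul_of_nonneg_left (hQn z h) (by positivity)
  have hmem1 : (1 : ℂ) ∈ closure U := by
    apply subset_closure
    rw [hU]
    refine ⟨by simpa using hρ1, by simpa using hR⟩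
  have := Complex.norm_le_of_forall_mem_frontier_norm_le hbd hdcc hfrb hmem1
  have hf1 : f 1 = (w + d) ^ N := by
    rw [hf]
    simp
  rwa [hf1] at this

/-- Hadamard three-circles type estimate for the spectral radius of an affine pencil. -/
lemma three_circles (w d : B) {ρ R P Q : ℝ} (hρ0 : 0 < ρ) (hρ1 : ρ < 1) (hR : 1 < R)
    (hP0 : 0 ≤ P) (hQ0 : 0 ≤ Q)
    (hP : ∀ μ : ℂ, ‖μ‖ = ρ → rr (w + μ • d) ≤ P)
    (hQ : ∀ μ : ℂ, ‖μ‖ = R → rr (w + μ • d) ≤ Q)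
    {s ε : ℝ} (hs : 0 < s) (hε : 0 < ε) :
    rr (w + d) ≤ max (ρ ^ (-(2*s)) * (P + ε)) (R ^ (-s) * (Q + ε)) := by
  obtain ⟨kρ, hkρ⟩ := dini_circle w d hρ0 (by linarith : (0:ℝ) < P + ε)
    (fun μ h => lt_of_le_of_lt (hP μ h) (by linarith))
  obtain ⟨kR, hkR⟩ := dini_circle w d (by linarith : (0:ℝ) < R) (by linarith : (0:ℝ) < Q + ε)
    (fun μ h => lt_of_le_of_lt (hQ μ h) (by linarith))
  obtain ⟨k₁, hk₁⟩ := pow_unbounded_of_one_lt (R := ℝ) (1/s) one_lt_two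
  set k := max (max kρ kR) k₁ with hk
  set N : ℕ := 2 ^ k with hN
  have hNpos : 0 < N := by positivity
  have hNR : (1:ℝ) ≤ s * N := by
    have h2 : (2:ℝ) ^ k₁ ≤ (2:ℝ) ^ k :=
      pow_le_pow_right₀ one_le_two (le_trans (le_max_right _ _) (le_refl k))
    have hsk : 1/s < (2:ℝ)^k := lt_of_lt_of_le hk₁ h2
    have hNc : ((N:ℕ):ℝ) = (2:ℝ)^k := by
      rw [hN]; push_cast; ring
    rw [hNc]
    rw [div_lt_iff₀ hs] at hsk
    linarith [mul_comm s ((2:ℝ)^k)]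
  set m : ℕ := ⌈s * N⌉₊ with hm
  have hm1 : s * N ≤ m := Nat.le_ceil _
  have hm2 : (m:ℝ) ≤ 2 * (s * N) := by
    have := Nat.ceil_lt_add_one (by positivity : (0:ℝ) ≤ s * N)
    have h2' : (m:ℝ) < s*N + 1 := by exact_mod_cast this
    linarith
  have hbound := annulus_bound w d hρ0 hρ1 hR N m
    (Pn := (P + ε) ^ N) (Qn := (Q + ε) ^ N)
    (fun μ h => hkρ k (le_trans (le_max_left _ _) (le_max_left _ _)) μ h)
    (fun μ h => hkR k (le_trans (le_max_right _ _) (le_max_left _ _)) μ h)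
  -- take N-th roots
  have hroot : rr (w + d) ≤ (max ((ρ ^ m)⁻¹ * (P + ε) ^ N) ((R ^ m)⁻¹ * (Q + ε) ^ N)) ^ ((1:ℝ)/N) := by
    calc rr (w + d) ≤ ‖(w + d) ^ N‖ ^ ((1:ℝ)/N) := rr_le_pow_root _ N hNpos
      _ ≤ _ := Real.rpow_le_rpow (norm_nonneg _) hbound (by positivity)
  -- simplify the root of the max
  have hPε : (0:ℝ) < P + ε := by linarith
  have hQε : (0:ℝ) < Q + ε := by linarith
  have hApow : (((ρ ^ m)⁻¹ * (P + ε) ^ N)) ^ ((1:ℝ)/N) = ρ ^ (-((m:ℝ)/N)) * (P + ε) := by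
    rw [Real.mul_rpow (by positivity) (by positivity)]
    congr 1
    · rw [← Real.rpow_natCast ρ m, ← Real.rpow_neg hρ0.le, ← Real.rpow_mul hρ0.le]
      congr 1
      field_simp
    · rw [← Real.rpow_natCast (P+ε) N, ← Real.rpow_mul hPε.le, mul_one_div,
        div_self (by positivity : (N:ℝ) ≠ 0), Real.rpow_one]
  have hBpow : (((R ^ m)⁻¹ * (Q + ε) ^ N)) ^ ((1:ℝ)/N) = R ^ (-((m:ℝ)/N)) * (Q + ε) := by
    rw [Real.mul_rpow (by positivity) (by positivity)]
    congr 1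
    · rw [← Real.rpow_natCast R m, ← Real.rpow_neg (by linarith : (0:ℝ) ≤ R),
        ← Real.rpow_mul (by linarith : (0:ℝ) ≤ R)]
      congr 1
      field_simp
    · rw [← Real.rpow_natCast (Q+ε) N, ← Real.rpow_mul hQε.le, mul_one_div,
        div_self (by positivity : (N:ℝ) ≠ 0), Real.rpow_one]
  have hmax : (max ((ρ ^ m)⁻¹ * (P + ε) ^ N) ((R ^ m)⁻¹ * (Q + ε) ^ N)) ^ ((1:ℝ)/N)
      ≤ max (ρ ^ (-(2*s)) * (P + ε)) (R ^ (-s) * (Q + ε)) := by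
    rcases max_cases ((ρ ^ m)⁻¹ * (P + ε) ^ N) ((R ^ m)⁻¹ * (Q + ε) ^ N) with ⟨heq, _⟩ | ⟨heq, _⟩
    · rw [heq, hApow]
      refine le_max_of_le_left (mul_le_mul_of_nonneg_right ?_ hPε.le)
      apply Real.rpow_le_rpow_of_exponent_ge hρ0 hρ1.le
      rw [neg_le_neg_iff, div_le_iff₀ (by positivity : (0:ℝ) < (N:ℝ))]
      calc (m:ℝ) ≤ 2 * (s * N) := hm2
        _ = 2 * s * N := by ring
    · rw [heq, hBpow]
      refine le_max_of_le_right (mul_le_mul_of_nonneg_right ?_ hQε.le)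
      apply Real.rpow_le_rpow_of_exponent_le hR.le
      rw [neg_le_neg_iff, le_div_iff₀ (by positivity : (0:ℝ) < (N:ℝ))]
      linarith
  exact le_trans hroot hmax

lemma tendsto_rpow_factor {ρ : ℝ} (hρ0 : 0 < ρ) (C : ℝ) :
    Tendsto (fun s : ℝ => ρ ^ (-(2*s)) * C) (𝓝[>] (0:ℝ)) (𝓝 C) := by
  have hrw : (fun s : ℝ => ρ ^ (-(2*s)) * C)
      = fun s : ℝ => Real.exp (Real.log ρ * (-(2*s))) * C := by
    funext s
    rw [Real.rpow_def_of_pos hρ0]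
  rw [hrw]
  have hcont : Continuous fun s : ℝ => Real.exp (Real.log ρ * (-(2*s))) * C := by
    fun_prop
  have h0 : Real.exp (Real.log ρ * (-(2*(0:ℝ)))) * C = C := by
    norm_num
  have := hcont.tendsto (0 : ℝ)
  rw [h0] at this
  exact this.mono_left nhdsWithin_le_nhds

lemma exists_R_small {s c : ℝ} (hs : 0 < s) (hc : 0 < c) :
    ∃ R : ℝ, 1 < R ∧ R ^ (-s) ≤ c := by
  set x := (1/c) ^ ((1:ℝ)/s) with hx
  have hxnn : 0 ≤ x := Real.rpow_nonneg (by positivity) _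
  set R := max 2 x with hR
  have hR1 : (1:ℝ) < R := lt_of_lt_of_le one_lt_two (le_max_left _ _)
  refine ⟨R, hR1, ?_⟩
  have hxs : x ^ s = 1/c := by
    rw [hx, ← Real.rpow_mul (by positivity : (0:ℝ) ≤ 1/c),
      one_div_mul_cancel hs.ne', Real.rpow_one]
  have h1 : 1/c ≤ R ^ s := by
    rw [← hxs]
    exact Real.rpow_le_rpow hxnn (le_max_right _ _) hs.le
  rw [Real.rpow_neg (by linarith : (0:ℝ) ≤ R)]
  calc (R ^ s)⁻¹ ≤ (1/c)⁻¹ := by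
        apply inv_anti₀ (by positivity) h1
    _ = c := by rw [one_div, inv_inv]

/-- Liouville-type step : if the pencil b + z•y has uniformly bounded spectral radii,
then adding y does not increase the spectral radius. -/
lemma rr_add_le (b y : B) {K : ℝ} (hK : ∀ z : ℂ, rr (b + z • y) ≤ K) :
    rr (b + y) ≤ rr b := by
  refine le_of_forall_pos_le_add fun ε hε => ?_
  have hε4 : (0:ℝ) < ε/4 := by linarith
  obtain ⟨δ, hδpos, hδ⟩ := rr_usc b (show (0:ℝ) < ε/2 by linarith)
  set ρ := min (1/2) (δ / (‖y‖ + 1)) with hρ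
  have hρ0 : 0 < ρ := lt_min (by norm_num) (by positivity)
  have hρ1 : ρ < 1 := lt_of_le_of_lt (min_le_left _ _) (by norm_num)
  set P := rr b + ε/2 with hP
  set Q := max K 0 with hQ
  clear_value P Q
  have hP0 : 0 ≤ P := by
    have := rr_nonneg b
    rw [hP]; linarith
  have hQ0 : 0 ≤ Q := hQ ▸ le_max_right _ _
  have hPin : ∀ μ : ℂ, ‖μ‖ = ρ → rr (b + μ • y) ≤ P := by
    intro μ hμ
    apply hδ
    rw [norm_smul, hμ]
    calc ρ * ‖y‖ ≤ (δ / (‖y‖ + 1)) * ‖y‖ :=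
          mul_le_mul_of_nonneg_right (min_le_right _ _) (norm_nonneg _)
      _ ≤ δ := by
          rw [div_mul_eq_mul_div, div_le_iff₀ (by positivity)]
          nlinarith [norm_nonneg y, hδpos]
  have hclaim : ∀ s ∈ Set.Ioi (0:ℝ), rr (b + y) ≤ ρ ^ (-(2*s)) * (P + ε/4) := by
    intro s hs
    rw [Set.mem_Ioi] at hs
    have hρs : 0 < ρ ^ (-(2*s)) := Real.rpow_pos_of_pos hρ0 _
    have hPpos : 0 < P + ε/4 := by linarith
    have hQpos : 0 < Q + ε/4 := by linarith
    have hcpos : 0 < (ρ ^ (-(2*s)) * (P + ε/4)) / (Q + ε/4) := by positivity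
    obtain ⟨R, hR1, hRs⟩ := exists_R_small hs hcpos
    have hQin : ∀ μ : ℂ, ‖μ‖ = R → rr (b + μ • y) ≤ Q := fun μ _ => hQ ▸ le_max_of_le_left (hK μ)
    have h3 := three_circles b y hρ0 hρ1 hR1 hP0 hQ0 hPin hQin hs hε4
    refine le_trans h3 (max_le (le_refl _) ?_)
    calc R ^ (-s) * (Q + ε/4)
        ≤ ((ρ ^ (-(2*s)) * (P + ε/4)) / (Q + ε/4)) * (Q + ε/4) :=
          mul_le_mul_of_nonneg_right hRs hQpos.le
      _ = ρ ^ (-(2*s)) * (P + ε/4) := div_mul_cancel₀ _ hQpos.ne'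
  have hfin : rr (b + y) ≤ P + ε/4 :=
    ge_of_tendsto (tendsto_rpow_factor hρ0 (P + ε/4))
      (eventually_nhdsWithin_of_forall hclaim)
  rw [hP] at hfin
  linarith

section Key1

variable {A : Type*} [NormedRing A] [NormedAlgebra ℂ A] [CompleteSpace A] [NormOneClass A]
variable {B' : Type*} [NormedRing B'] [NormedAlgebra ℂ B'] [CompleteSpace B'] [NormOneClass B']

/-- Separating space inequality : if y is a limit of T xₙ with xₙ → 0, then
r(Ta + y) ≤ M r(a). -/
lemma key1 (T : A →ₗ[ℂ] B') (M : ℝ) (hM : 0 ≤ M)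
    (hsb : ∀ x : A, rr (T x) ≤ M * rr x)
    (x : ℕ → A) (y : B') (ytil : A) (hytil : T ytil = y)
    (hx0 : Tendsto x atTop (𝓝 0))
    (hxy : Tendsto (fun n => T (x n)) atTop (𝓝 y))
    (a : A) : rr (T a + y) ≤ M * rr a := by
  refine le_of_forall_pos_le_add fun ε hε => ?_
  have hM1 : (0:ℝ) < M + 1 := by linarith
  set ε' := ε / (2 * (M + 1)) with hε'def
  have hε'pos : 0 < ε' := by rw [hε'def]; positivity
  have hMε' : M * ε' ≤ ε/2 := by
    rw [hε'def, ← mul_div_assoc, div_le_div_iff₀ (by positivity) (by norm_num : (0:ℝ) < 2)]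
    nlinarith
  obtain ⟨δ, hδpos, hδ⟩ := rr_usc a hε'pos
  set ρ := min (1/2) (δ / (2 * (‖ytil‖ + 1))) with hρdef
  have hρ0 : 0 < ρ := lt_min (by norm_num) (by positivity)
  have hρ1 : ρ < 1 := lt_of_le_of_lt (min_le_left _ _) (by norm_num)
  have hρhalf : ρ ≤ 1/2 := min_le_left _ _
  have hρy : ρ ≤ δ / (2 * (‖ytil‖ + 1)) := min_le_right _ _
  clear_value ρ
  have hnormev : ∀ᶠ n in atTop, ‖x n‖ ≤ min (min (δ/4) 1) δ := by
    have h2 : Tendsto (fun n => ‖x n‖) atTop (𝓝 0) := by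
      have := hx0.norm
      rwa [norm_zero] at this
    exact (h2.eventually_lt_const (by positivity : (0:ℝ) < min (min (δ/4) 1) δ)).mono
      fun n hn => hn.le
  by_cases hAcase : ∀ N : ℕ, ∃ n ≥ N, T (x n) = y
  · -- easy case
    obtain ⟨N₀, hN₀⟩ := eventually_atTop.mp hnormev
    obtain ⟨n, hn, hTn⟩ := hAcase N₀
    have heq : T a + y = T (a + x n) := by rw [map_add, hTn]
    rw [heq]
    have hsmall : ‖x n‖ ≤ δ := le_trans (hN₀ n hn) (min_le_right _ _)
    calc rr (T (a + x n)) ≤ M * rr (a + x n) := hsb _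
      _ ≤ M * (rr a + ε') := mul_le_mul_of_nonneg_left (hδ _ hsmall) hM
      _ = M * rr a + M * ε' := by ring
      _ ≤ M * rr a + ε := by linarith
  · push_neg at hAcase
    obtain ⟨N₁, hN₁⟩ := hAcase
    set Q := ‖T a‖ + ‖y‖ + 2 with hQdef
    set P := M * (rr a + ε') with hPdef
    have hP0 : 0 ≤ P := by
      rw [hPdef]
      have := rr_nonneg a
      apply mul_nonneg hM (by linarith)
    have hQ0 : 0 ≤ Q := by rw [hQdef]; positivity
    clear_value P Q
    have hclaim : ∀ s ∈ Set.Ioi (0:ℝ), rr (T a + y) ≤ ρ ^ (-(2*s)) * (P + ε/4) := by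
      intro s hs
      rw [Set.mem_Ioi] at hs
      have hPpos : 0 < P + ε/4 := by linarith
      have hQpos : 0 < Q + ε/4 := by linarith
      have hρs : 0 < ρ ^ (-(2*s)) := Real.rpow_pos_of_pos hρ0 _
      have hcpos : 0 < (ρ ^ (-(2*s)) * (P + ε/4)) / (Q + ε/4) := by positivity
      obtain ⟨R₀, hR₀1, hR₀s⟩ := exists_R_small hs hcpos
      -- choose n
      have hev2 : ∀ᶠ n in atTop, ‖T (x n) - y‖ < R₀⁻¹ := by
        have h3 : Tendsto (fun n => ‖T (x n) - y‖) atTop (𝓝 0) := by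
          have h4 := (hxy.sub_const y).norm
          rwa [sub_self, norm_zero] at h4
        exact h3.eventually_lt_const (by positivity)
      have hev3 : ∀ᶠ n in atTop, ‖T (x n)‖ ≤ ‖y‖ + 1 := by
        have h5 := hxy.norm
        exact (h5.eventually_lt_const (by linarith : ‖y‖ < ‖y‖ + 1)).mono fun n hn => hn.le
      obtain ⟨n, hnev, hnN₁⟩ :=
        (((hnormev.and hev2).and hev3).and (eventually_ge_atTop N₁)).exists
      obtain ⟨⟨hxn, hdn⟩, hTn⟩ := hnev
      have hxn4 : ‖x n‖ ≤ δ/4 := le_trans hxn (le_trans (min_le_left _ _) (min_le_left _ _))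
      have hxn1 : ‖x n‖ ≤ 1 := le_trans hxn (le_trans (min_le_left _ _) (min_le_right _ _))
      set d := y - T (x n) with hddef
      have hdne : d ≠ 0 := sub_ne_zero.mpr (Ne.symm (hN₁ n hnN₁))
      have hdnorm : 0 < ‖d‖ := norm_pos_iff.mpr hdne
      set R := ‖d‖⁻¹ with hRdef
      have hdR₀ : ‖d‖ < R₀⁻¹ := by
        rw [hddef, ← norm_neg]
        simpa [neg_sub] using hdn
      have hRR₀ : R₀ ≤ R := by
        rw [hRdef]
        have := inv_anti₀ hdnorm hdR₀.le
        rwa [inv_inv] at this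
      have hR1 : 1 < R := lt_of_lt_of_le hR₀1 hRR₀
      have hPin : ∀ μ : ℂ, ‖μ‖ = ρ → rr ((T a + T (x n)) + μ • d) ≤ P := by
        intro μ hμ
        have heq : (T a + T (x n)) + μ • d = T (a + (x n + μ • (ytil - x n))) := by
          rw [hddef, map_add, map_add, map_smul, map_sub, hytil]
          abel
        rw [heq]
        refine le_trans (hsb _) ?_
        have hsmall : ‖x n + μ • (ytil - x n)‖ ≤ δ := by
          have h4 := norm_add_le (x n) (μ • (ytil - x n))
          have h5 : ‖μ • (ytil - x n)‖ = ρ * ‖ytil - x n‖ := by rw [norm_smul, hμ]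
          have h6 : ‖ytil - x n‖ ≤ ‖ytil‖ + ‖x n‖ := norm_sub_le _ _
          have h10 : ρ * ‖ytil‖ ≤ δ/2 := by
            calc ρ * ‖ytil‖ ≤ (δ / (2*(‖ytil‖+1))) * (‖ytil‖+1) := by
                  apply mul_le_mul hρy (by linarith) (norm_nonneg _) (by positivity)
              _ = δ/2 := by field_simp
          have h11 : ρ * ‖x n‖ ≤ (1/2) * ‖x n‖ :=
            mul_le_mul_of_nonneg_right hρhalf (norm_nonneg _)
          have h12 : ρ * ‖ytil - x n‖ ≤ ρ * (‖ytil‖ + ‖x n‖) :=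
            mul_le_mul_of_nonneg_left h6 hρ0.le
          nlinarith [norm_nonneg (x n)]
        calc M * rr (a + (x n + μ • (ytil - x n))) ≤ M * (rr a + ε') :=
              mul_le_mul_of_nonneg_left (hδ _ hsmall) hM
          _ = P := hPdef.symm
      have hQin : ∀ μ : ℂ, ‖μ‖ = R → rr ((T a + T (x n)) + μ • d) ≤ Q := by
        intro μ hμ
        refine le_trans (rr_le_norm _) ?_
        have h13 : ‖T a + T (x n) + μ • d‖ ≤ ‖T a‖ + ‖T (x n)‖ + ‖μ • d‖ := by
          calc ‖T a + T (x n) + μ • d‖ ≤ ‖T a + T (x n)‖ + ‖μ • d‖ := norm_add_le _ _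
            _ ≤ ‖T a‖ + ‖T (x n)‖ + ‖μ • d‖ := by
                have := norm_add_le (T a) (T (x n))
                linarith
        have h14 : ‖μ • d‖ = 1 := by
          rw [norm_smul, hμ, hRdef, inv_mul_cancel₀ hdnorm.ne']
        rw [h14] at h13
        rw [hQdef]
        linarith
      have h3 := three_circles (T a + T (x n)) d hρ0 hρ1 hR1 hP0 hQ0 hPin hQin hs
        (by linarith : (0:ℝ) < ε/4)
      have hval : (T a + T (x n)) + d = T a + y := by rw [hddef]; abel
      rw [hval] at h3
      refine le_trans h3 (max_le (le_refl _) ?_)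
      calc R ^ (-s) * (Q + ε/4) ≤ R₀ ^ (-s) * (Q + ε/4) := by
            apply mul_le_mul_of_nonneg_right _ hQpos.le
            rw [Real.rpow_neg (by linarith : (0:ℝ) ≤ R), Real.rpow_neg (by linarith : (0:ℝ) ≤ R₀)]
            exact inv_anti₀ (Real.rpow_pos_of_pos (by linarith) s)
              (Real.rpow_le_rpow (by linarith) hRR₀ hs.le)
        _ ≤ ((ρ ^ (-(2*s)) * (P + ε/4)) / (Q + ε/4)) * (Q + ε/4) :=
            mul_le_mul_of_nonneg_right hR₀s hQpos.le
        _ = ρ ^ (-(2*s)) * (P + ε/4) := div_mul_cancel₀ _ hQpos.ne'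
    have hfin : rr (T a + y) ≤ P + ε/4 :=
      ge_of_tendsto (tendsto_rpow_factor hρ0 (P + ε/4))
        (eventually_nhdsWithin_of_forall hclaim)
    rw [hPdef] at hfin
    have hexp : M * (rr a + ε') = M * rr a + M * ε' := by ring
    linarith

end Key1

end AupetitProof


open AupetitProof Filter in
/-- Aupetit's theorem: the separating space of a surjective spectrally bounded operator
between Banach algebras is contained in the Jacobson radical of the codomain; in particular
if the codomain is semisimple then the operator is continuous. -/
theorem separating_space_subset_radical_of_spectrally_bounded
    {A B : Type*}
    [NormedRing A] [NormedAlgebra ℂ A] [CompleteSpace A] [NormOneClass A]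
    [NormedRing B] [NormedAlgebra ℂ B] [CompleteSpace B] [NormOneClass B]
    (T : A →ₗ[ℂ] B) (hsurj : Function.Surjective T) (M : ℝ≥0)
    (hsb : ∀ x : A, spectralRadius ℂ (T x) ≤ (M : ℝ≥0∞) * spectralRadius ℂ x) :
    (∀ y : B, (∃ x : ℕ → A, Filter.Tendsto x Filter.atTop (𝓝 0) ∧
        Filter.Tendsto (fun n => T (x n)) Filter.atTop (𝓝 y)) →
      y ∈ (⊥ : TwoSidedIdeal B).jacobson) ∧
    ((⊥ : TwoSidedIdeal B).jacobson = ⊥ → Continuous T) := by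
  classical
  have hsbr : ∀ xx : A, rr (T xx) ≤ (M:ℝ) * rr xx := by
    intro xx
    have h := hsb xx
    have hfin : ((M : ℝ≥0∞)) * spectralRadius ℂ xx ≠ ⊤ :=
      ENNReal.mul_ne_top ENNReal.coe_ne_top (spectralRadius_ne_top xx)
    have h2 := ENNReal.toReal_mono hfin h
    rw [ENNReal.toReal_mul, ENNReal.coe_toReal] at h2
    exact h2
  have hmain : ∀ y : B, (∃ x : ℕ → A, Filter.Tendsto x Filter.atTop (𝓝 0) ∧
      Filter.Tendsto (fun n => T (x n)) Filter.atTop (𝓝 y)) →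
      y ∈ (⊥ : TwoSidedIdeal B).jacobson := by
    intro y hy
    obtain ⟨x, hx0, hxy⟩ := hy
    have key1all : ∀ (a : A) (z : ℂ), rr (T a + z • y) ≤ (M:ℝ) * rr a := by
      intro a z
      obtain ⟨yt, hyt⟩ := hsurj (z • y)
      apply key1 T (M:ℝ) M.coe_nonneg hsbr (fun n => z • x n) (z • y) yt hyt
      · have := hx0.const_smul z
        rwa [smul_zero] at this
      · have h6 : (fun n => T (z • x n)) = fun n => z • T (x n) := by
          funext n; rw [map_smul]
        rw [h6]
        exact hxy.const_smul z
    have h1 : rr y = 0 := by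
      have h7 := key1all 0 1
      rw [map_zero, rr_zero, zero_add, one_smul, mul_zero] at h7
      exact le_antisymm h7 (rr_nonneg y)
    have h2 : ∀ u : Bˣ, rr ((u:B) * y * (↑u⁻¹:B) - y) = 0 := by
      intro u
      obtain ⟨ab, hab⟩ := hsurj ((u:B) * y * (↑u⁻¹:B))
      have hbnd : ∀ z : ℂ, rr ((u:B) * y * (↑u⁻¹:B) + z • (-y)) ≤ (M:ℝ) * rr ab := by
        intro z
        have h8 := key1all ab (-z)
        rw [hab] at h8
        have h9 : (u:B) * y * (↑u⁻¹:B) + z • (-y) = (u:B) * y * (↑u⁻¹:B) + (-z) • y := by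
          rw [smul_neg, neg_smul]
        rw [h9]
        exact h8
      have hle := rr_add_le ((u:B) * y * (↑u⁻¹:B)) (-y) hbnd
      rw [rr_conj u y, h1] at hle
      have h10 : rr ((u:B) * y * (↑u⁻¹:B) - y) ≤ 0 := by
        rw [sub_eq_add_neg]; exact hle
      exact le_antisymm h10 (rr_nonneg _)
    rw [← TwoSidedIdeal.mem_asIdeal, TwoSidedIdeal.asIdeal_jacobson]
    rw [Ideal.jacobson]
    rw [Ideal.mem_sInf]
    intro J hJ
    exact mem_maximal_of_conj y h1 h2 J hJ.2
  refine ⟨hmain, fun hrad => ?_⟩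
  apply T.continuous_of_seq_closed_graph
  intro u xx z hu hTu
  have hsep : ∃ xs : ℕ → A, Tendsto xs atTop (𝓝 0) ∧
      Tendsto (fun n => T (xs n)) atTop (𝓝 (z - T xx)) := by
    refine ⟨fun n => u n - xx, ?_, ?_⟩
    · have := hu.sub_const xx
      rwa [sub_self] at this
    · have h6 : (fun n => T (u n - xx)) = fun n => T (u n) - T xx := by
        funext n; rw [map_sub]
      rw [h6]
      have h7 : Tendsto (fun n => T (u n)) atTop (𝓝 z) := hTu
      exact h7.sub_const (T xx)
  have hmem := hmain (z - T xx) hsep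
  rw [hrad] at hmem
  have hz0 : z - T xx = 0 := by simpa using hmem
  exact sub_eq_zero.mp hz0
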